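/- Let R be a commutative ℚ-algebra and D : R → R a ℚ-linear map such that D(xyz) = x·D(yz) + y·D(xz) + z·D(xy) - xy·D(z) - xz·D(y) - yz·D(x) for all x,y,z ∈ R. Define the symmetric bilinear map D₂(x,y) = D(xy) - x·D(y) - y·D(x). Then for all n ≥ 1 and all x₁,…,xₙ ∈ R: D(x₁⋯xₙ) = ∑_{i=1}^n D(x_i)·∏_{j≠i} x_j + ∑_{1≤i<j≤n} D₂(x_i,x_j)·∏_{k≠i,j} x_k. -/

import Mathlib

open Finset

private lemma ifprod_aux {ι R : Type*} [CommMonoid R] [DecidableEq ι] (s : Finset ι)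
    (f : ι → R) (k : ι) (hk : k ∈ s) :
    ∏ j ∈ s.erase k, f j = ∏ j ∈ s, if j = k then 1 else f j := by
  rw [← Finset.mul_prod_erase s _ hk, if_pos rfl, one_mul]
  exact Finset.prod_congr rfl fun j hj => by rw [if_neg (Finset.ne_of_mem_erase hj)]

private lemma prod_erase_castSucc_aux {R : Type*} [CommRing R] {n : ℕ}
    (y : Fin (n+1) → R) (i : Fin n) :
    ∏ j ∈ univ.erase i.castSucc, y j
      = (∏ j ∈ univ.erase i, y j.castSucc) * y (Fin.last n) := by
  rw [ifprod_aux _ _ _ (mem_univ _), ifprod_aux _ _ _ (mem_univ _), Fin.prod_univ_castSucc]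
  simp [Fin.castSucc_inj, (Fin.castSucc_lt_last i).ne']

private lemma prod_erase_last_aux {R : Type*} [CommRing R] {n : ℕ} (y : Fin (n+1) → R) :
    ∏ j ∈ univ.erase (Fin.last n), y j = ∏ j : Fin n, y j.castSucc := by
  rw [ifprod_aux _ _ _ (mem_univ _), Fin.prod_univ_castSucc]
  simp [(Fin.castSucc_lt_last _).ne]

private lemma prod_erase2_castSucc_aux {R : Type*} [CommRing R] {n : ℕ}
    (y : Fin (n+1) → R) (i j : Fin n) (hij : i ≠ j) :
    ∏ k ∈ (univ.erase i.castSucc).erase j.castSucc, y k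
      = (∏ k ∈ (univ.erase i).erase j, y k.castSucc) * y (Fin.last n) := by
  rw [ifprod_aux _ _ _
        (Finset.mem_erase.2 ⟨by simpa [Fin.castSucc_inj] using (Ne.symm hij), mem_univ _⟩),
      ifprod_aux _ _ _ (mem_univ _),
      ifprod_aux _ _ _ (Finset.mem_erase.2 ⟨Ne.symm hij, mem_univ _⟩),
      ifprod_aux _ _ _ (mem_univ _), Fin.prod_univ_castSucc]
  simp [Fin.castSucc_inj, (Fin.castSucc_lt_last i).ne', (Fin.castSucc_lt_last j).ne']

private lemma prod_erase2_last_aux {R : Type*} [CommRing R] {n : ℕ}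
    (y : Fin (n+1) → R) (i : Fin n) :
    ∏ k ∈ (univ.erase i.castSucc).erase (Fin.last n), y k
      = ∏ k ∈ univ.erase i, y k.castSucc := by
  rw [ifprod_aux _ _ _ (Finset.mem_erase.2 ⟨(Fin.castSucc_lt_last i).ne', mem_univ _⟩),
      ifprod_aux _ _ _ (mem_univ _), ifprod_aux _ _ _ (mem_univ _), Fin.prod_univ_castSucc]
  have h : ∀ k : Fin n, (k.castSucc = Fin.last n) = False :=
    fun k => by simp [(Fin.castSucc_lt_last k).ne]
  simp [Fin.castSucc_inj, (Fin.castSucc_lt_last i).ne', h]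

private lemma pair_sum_split_aux {M : Type*} [AddCommMonoid M] {n : ℕ}
    (f : Fin (n+1) → Fin (n+1) → M) :
    ∑ p ∈ (univ : Finset (Fin (n+1) × Fin (n+1))).filter (fun p => p.1 < p.2), f p.1 p.2
      = (∑ p ∈ (univ : Finset (Fin n × Fin n)).filter (fun p => p.1 < p.2),
          f p.1.castSucc p.2.castSucc)
        + ∑ i : Fin n, f i.castSucc (Fin.last n) := by
  have hlast : ∀ j : Fin (n+1), ¬ (Fin.last n < j) := fun j => not_lt.2 (Fin.le_last j)
  rw [Finset.sum_filter, Finset.sum_filter, Fintype.sum_prod_type, Fintype.sum_prod_type]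
  simp [Fin.sum_univ_castSucc, Fin.castSucc_lt_castSucc_iff, Fin.castSucc_lt_last, hlast,
    Finset.sum_add_distrib]

private lemma Eprod_aux {R : Type*} [CommRing R] [Algebra ℚ R] (D : R →ₗ[ℚ] R)
    (hD : ∀ x y z : R,
      D (x * y * z) = x * D (y * z) + y * D (x * z) + z * D (x * y)
        - x * y * D z - x * z * D y - y * z * D x) :
    ∀ (n : ℕ) (y : Fin n → R) (c : R),
      D ((∏ i, y i) * c) - (∏ i, y i) * D c - c * D (∏ i, y i)
        = ∑ i, (D (y i * c) - y i * D c - c * D (y i)) * ∏ j ∈ univ.erase i, y j := by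
  have h1 : D 1 = 0 := by
    have h := hD 1 1 1; simp only [mul_one, one_mul] at h; linear_combination h
  intro n
  induction n with
  | zero => intro y c; simp [h1]
  | succ n ih =>
    intro y c
    rw [Fin.prod_univ_castSucc, Fin.sum_univ_castSucc, prod_erase_last_aux]
    simp_rw [prod_erase_castSucc_aux y, ← mul_assoc]
    rw [← Finset.sum_mul, ← ih (fun i => y i.castSucc) c]
    linear_combination hD (∏ i : Fin n, y i.castSucc) (y (Fin.last n)) c

private lemma main_aux {R : Type*} [CommRing R] [Algebra ℚ R] (D : R →ₗ[ℚ] R)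
    (hD : ∀ x y z : R,
      D (x * y * z) = x * D (y * z) + y * D (x * z) + z * D (x * y)
        - x * y * D z - x * z * D y - y * z * D x) :
    ∀ (n : ℕ) (x : Fin n → R),
      D (∏ i, x i) =
        (∑ i, D (x i) * ∏ j ∈ Finset.univ.erase i, x j) +
        ∑ p ∈ Finset.univ.filter (fun p : Fin n × Fin n => p.1 < p.2),
          (D (x p.1 * x p.2) - x p.1 * D (x p.2) - x p.2 * D (x p.1)) *
            ∏ k ∈ (Finset.univ.erase p.1).erase p.2, x k := by
  have h1 : D 1 = 0 := by
    have h := hD 1 1 1; simp only [mul_one, one_mul] at h; linear_combination h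
  intro n
  induction n with
  | zero => intro x; simp [h1]
  | succ n ih =>
    intro x
    rw [Fin.prod_univ_castSucc, Fin.sum_univ_castSucc, prod_erase_last_aux,
        pair_sum_split_aux
          (fun i j => (D (x i * x j) - x i * D (x j) - x j * D (x i)) *
            ∏ k ∈ (Finset.univ.erase i).erase j, x k)]
    have hpairs :
        (∑ p ∈ (univ : Finset (Fin n × Fin n)).filter (fun p => p.1 < p.2),
          (D (x p.1.castSucc * x p.2.castSucc) - x p.1.castSucc * D (x p.2.castSucc)
            - x p.2.castSucc * D (x p.1.castSucc)) *
            ∏ k ∈ (univ.erase p.1.castSucc).erase p.2.castSucc, x k)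
        = ∑ p ∈ (univ : Finset (Fin n × Fin n)).filter (fun p => p.1 < p.2),
          (D (x p.1.castSucc * x p.2.castSucc) - x p.1.castSucc * D (x p.2.castSucc)
            - x p.2.castSucc * D (x p.1.castSucc)) *
            ((∏ k ∈ (univ.erase p.1).erase p.2, x k.castSucc) * x (Fin.last n)) :=
      Finset.sum_congr rfl fun p hp => by
        rw [prod_erase2_castSucc_aux x p.1 p.2 (Finset.mem_filter.1 hp).2.ne]
    rw [hpairs]
    simp_rw [prod_erase2_last_aux x, prod_erase_castSucc_aux x, ← mul_assoc]
    rw [← Finset.sum_mul, ← Finset.sum_mul]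
    have hE := Eprod_aux D hD n (fun i => x i.castSucc) (x (Fin.last n))
    have hI := ih (fun i => x i.castSucc)
    simp only at hE hI
    linear_combination hE + x (Fin.last n) * hI

theorem second_order_product_expansion {R : Type*} [CommRing R] [Algebra ℚ R]
    (D : R →ₗ[ℚ] R)
    (hD : ∀ x y z : R,
      D (x * y * z) = x * D (y * z) + y * D (x * z) + z * D (x * y)
        - x * y * D z - x * z * D y - y * z * D x) :
    ∀ (n : ℕ), 1 ≤ n → ∀ x : Fin n → R,
      D (∏ i, x i) =
        (∑ i, D (x i) * ∏ j ∈ Finset.univ.erase i, x j) +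
        ∑ p ∈ Finset.univ.filter (fun p : Fin n × Fin n => p.1 < p.2),
          (D (x p.1 * x p.2) - x p.1 * D (x p.2) - x p.2 * D (x p.1)) *
            ∏ k ∈ (Finset.univ.erase p.1).erase p.2, x k := by
  intro n _ x
  exact main_aux D hD n x
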